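/- For all integers n ≥ 1, the number of two-ball prime juggling patterns P(n,2) := Σ_{t≥1} c_t(n) satisfies P(n,2) ≤ γ·2^n, where γ = Σ_{t≥1} q_t with q_1 = 1/2 and q_t = ((t-1)/(2^t-t-1))·q_{t-1} for t ≥ 2. -/

import Mathlib

open scoped Classical

/-- `primeWeight t n` : sum over partitions of `n` into `t` distinct positive parts
`p 0 > p 1 > ⋯ > p (t-1) ≥ 1` of `(1/(t(t+1))) ∏_{i=1}^{t} ((i+1)/i)^{p_i}`. -/
noncomputable def primeWeight (t n : ℕ) : ℝ :=
  ∑ p ∈ (Fintype.piFinset (fun _ : Fin t => Finset.range (n + 1))).filter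
      (fun p => (∀ i j : Fin t, i < j → p j < p i) ∧ (∀ i, 1 ≤ p i) ∧
        ∑ i, p i = n),
    (1 / ((t : ℝ) * ((t : ℝ) + 1))) *
      ∏ i : Fin t, ((((i : ℕ) : ℝ) + 2) / (((i : ℕ) : ℝ) + 1)) ^ p i

/-- `qseq 1 = 1/2` and `qseq t = ((t-1)/(2^t - t - 1)) * qseq (t-1)` for `t ≥ 2`. -/
noncomputable def qseq : ℕ → ℝ
  | 0 => 0
  | 1 => 1 / 2
  | t + 2 => (((t : ℝ) + 1) / (2 ^ (t + 2) - ((t : ℝ) + 2) - 1)) * qseq (t + 1)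

namespace JugAux

noncomputable def b (i : ℕ) : ℝ := ((i : ℝ) + 2) / ((i : ℝ) + 1)

def Pset (t n : ℕ) : Finset (Fin t → ℕ) :=
  (Fintype.piFinset (fun _ : Fin t => Finset.range (n + 1))).filter
    (fun p => (∀ i j : Fin t, i < j → p j < p i) ∧ (∀ i, 1 ≤ p i) ∧ ∑ i, p i = n)

noncomputable def term (t : ℕ) (p : Fin t → ℕ) : ℝ := ∏ i : Fin t, b i ^ p i

noncomputable def W (t n : ℕ) : ℝ := ∑ p ∈ Pset t n, term t p

lemma b_nonneg (i : ℕ) : 0 ≤ b i := by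
  unfold b; positivity

lemma term_nonneg (t : ℕ) (p : Fin t → ℕ) : 0 ≤ term t p := by
  unfold term
  exact Finset.prod_nonneg fun i _ => pow_nonneg (b_nonneg i) _

lemma W_nonneg (t n : ℕ) : 0 ≤ W t n :=
  Finset.sum_nonneg fun p _ => term_nonneg t p

lemma prod_b (t : ℕ) : ∏ i : Fin t, b (i : ℕ) = (t : ℝ) + 1 := by
  induction t with
  | zero => simp
  | succ t ih =>
    rw [Fin.prod_univ_castSucc]
    simp only [Fin.coe_castSucc, Fin.val_last] at *
    rw [ih]
    unfold b
    have h : ((t : ℝ) + 1) ≠ 0 := by positivity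
    field_simp
    push_cast; ring

lemma primeWeight_eq (t n : ℕ) :
    primeWeight t n = (1 / ((t : ℝ) * ((t : ℝ) + 1))) * W t n := by
  unfold primeWeight W Pset term b
  rw [Finset.mul_sum]

lemma mem_Pset {t n : ℕ} {p : Fin t → ℕ} :
    p ∈ Pset t n ↔ (∀ i, p i ≤ n) ∧ (∀ i j : Fin t, i < j → p j < p i) ∧
      (∀ i, 1 ≤ p i) ∧ ∑ i, p i = n := by
  unfold Pset
  simp [Fintype.mem_piFinset, Nat.lt_succ_iff]

lemma W_eq_zero (t n : ℕ) (h : n < t) : W t n = 0 := by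
  unfold W
  apply Finset.sum_eq_zero
  intro p hp
  exfalso
  rw [mem_Pset] at hp
  obtain ⟨-, -, h1, hsum⟩ := hp
  have ht : (∑ _i : Fin t, 1) ≤ ∑ i, p i := Finset.sum_le_sum fun i _ => h1 i
  simp at ht
  omega

lemma term_succ (t : ℕ) (p : Fin (t + 1) → ℕ) (k : ℕ) (hk : p (Fin.last t) = k)
    (hp : ∀ i : Fin t, k ≤ p i.castSucc) :
    term (t + 1) p = ((t : ℝ) + 2) ^ k * term t (fun i => p i.castSucc - k) := by
  unfold term
  rw [Fin.prod_univ_castSucc]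
  have h1 : ∀ i : Fin t, i ∈ Finset.univ → (b ((i.castSucc : Fin (t+1)) : ℕ)) ^ p i.castSucc
      = b (i : ℕ) ^ (p i.castSucc - k) * b (i : ℕ) ^ k := by
    intro i _
    rw [Fin.coe_castSucc, ← pow_add, Nat.sub_add_cancel (hp i)]
  rw [Finset.prod_congr rfl h1, Finset.prod_mul_distrib, Finset.prod_pow, prod_b,
    Fin.val_last, hk]
  have hb : ((t : ℝ) + 1) ^ k * b t ^ k = ((t : ℝ) + 2) ^ k := by
    rw [← mul_pow]
    congr 1
    unfold b
    have h : ((t : ℝ) + 1) ≠ 0 := by positivity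
    field_simp
  rw [mul_assoc, hb]
  ring

def emap (t : ℕ) (p : Fin (t + 1) → ℕ) : Σ _k : ℕ, Fin t → ℕ :=
  ⟨p (Fin.last t), fun i => p i.castSucc - p (Fin.last t)⟩

@[simp] lemma emap_fst (t : ℕ) (p : Fin (t + 1) → ℕ) :
    (emap t p).1 = p (Fin.last t) := rfl

@[simp] lemma emap_snd (t : ℕ) (p : Fin (t + 1) → ℕ) :
    (emap t p).2 = fun i => p i.castSucc - p (Fin.last t) := rfl

lemma W_step (t n : ℕ) :
    W (t + 1) n ≤ ∑ k ∈ (Finset.Icc 1 n).filter (fun k => (t + 1) * k ≤ n),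
      ((t : ℝ) + 2) ^ k * W t (n - (t + 1) * k) := by
  classical
  set K := (Finset.Icc 1 n).filter (fun k => (t + 1) * k ≤ n) with hK
  have hR : ∑ k ∈ K, ((t : ℝ) + 2) ^ k * W t (n - (t + 1) * k)
      = ∑ x ∈ K.sigma (fun k => Pset t (n - (t + 1) * k)),
          ((t : ℝ) + 2) ^ x.1 * term t x.2 := by
    rw [Finset.sum_sigma]
    exact Finset.sum_congr rfl fun k _ => by rw [W, Finset.mul_sum]
  rw [hR, W]
  have facts : ∀ p ∈ Pset (t + 1) n,
      (∀ i : Fin t, p (Fin.last t) < p i.castSucc) ∧ 1 ≤ p (Fin.last t) ∧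
      (t + 1) * p (Fin.last t) ≤ n ∧
      (∑ i : Fin t, (p i.castSucc - p (Fin.last t))) = n - (t + 1) * p (Fin.last t) := by
    intro p hp
    rw [mem_Pset] at hp
    obtain ⟨hbd, hdec, hpos, hsum⟩ := hp
    set k := p (Fin.last t) with hk
    have hlt : ∀ i : Fin t, k < p i.castSucc := by
      intro i
      exact hdec i.castSucc (Fin.last t) (Fin.castSucc_lt_last i)
    have hsum2 : (∑ i : Fin t, p i.castSucc) + k = n := by
      rw [← hsum, Fin.sum_univ_castSucc]
    have hS : (∑ i : Fin t, (p i.castSucc - k)) + t * k = ∑ i : Fin t, p i.castSucc := by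
      have h3 : ∑ i : Fin t, ((p i.castSucc - k) + k) = ∑ i : Fin t, p i.castSucc :=
        Finset.sum_congr rfl fun i _ => Nat.sub_add_cancel (hlt i).le
      simpa [Finset.sum_add_distrib, Finset.sum_const, mul_comm] using h3
    have hmul : (t + 1) * k = t * k + k := by ring
    refine ⟨hlt, hpos _, by omega, by omega⟩
  have hmem : ∀ p ∈ Pset (t + 1) n,
      emap t p ∈ K.sigma (fun k => Pset t (n - (t + 1) * k)) := by
    intro p hp
    obtain ⟨hlt, h1, h2, h3⟩ := facts p hp
    rw [Finset.mem_sigma]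
    constructor
    · rw [hK, Finset.mem_filter, Finset.mem_Icc]
      have hkn : p (Fin.last t) ≤ n := by
        calc p (Fin.last t) ≤ (t + 1) * p (Fin.last t) :=
              Nat.le_mul_of_pos_left _ (by omega)
          _ ≤ n := h2
      exact ⟨⟨h1, hkn⟩, h2⟩
    · rw [emap_fst, mem_Pset]
      have hsle : ∀ i : Fin t, (emap t p).2 i ≤ n - (t + 1) * p (Fin.last t) := by
        intro i
        have hs := Finset.single_le_sum
          (f := fun j : Fin t => p j.castSucc - p (Fin.last t))
          (fun j _ => Nat.zero_le _) (Finset.mem_univ i)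
        rw [h3] at hs
        simpa [emap] using hs
      refine ⟨fun i => hsle i, ?_, ?_, by simpa [emap] using h3⟩
      · intro i j hij
        rw [mem_Pset] at hp
        have h5 := hp.2.1 i.castSucc j.castSucc (by simpa using hij)
        have h4 := hlt j
        simp only [emap_snd]
        omega
      · intro i
        have := hlt i
        simp only [emap_snd]
        omega
  have hinj : ∀ p ∈ Pset (t + 1) n, ∀ q ∈ Pset (t + 1) n, emap t p = emap t q → p = q := by
    intro p hp q hq hpq
    obtain ⟨hltp, -, -, -⟩ := facts p hp
    obtain ⟨hltq, -, -, -⟩ := facts q hq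
    have hfst : p (Fin.last t) = q (Fin.last t) := by
      have := congrArg Sigma.fst hpq
      simpa using this
    have hsnd := congrArg Sigma.snd hpq
    simp only [emap_snd] at hsnd
    funext x
    refine Fin.lastCases ?_ ?_ x
    · exact hfst
    · intro i
      have h5 := congrFun hsnd i
      have h6 := hltp i
      have h7 := hltq i
      omega
  calc ∑ p ∈ Pset (t + 1) n, term (t + 1) p
      = ∑ p ∈ Pset (t + 1) n,
          (fun x : Σ _k : ℕ, Fin t → ℕ => ((t : ℝ) + 2) ^ x.1 * term t x.2) (emap t p) := by
        refine Finset.sum_congr rfl fun p hp => ?_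
        obtain ⟨hlt, -, -, -⟩ := facts p hp
        simpa [emap] using term_succ t p _ rfl fun i => (hlt i).le
    _ = ∑ x ∈ (Pset (t + 1) n).image (emap t),
          ((t : ℝ) + 2) ^ x.1 * term t x.2 := (Finset.sum_image (f := fun x : Σ _k : ℕ, Fin t → ℕ => ((t : ℝ) + 2) ^ x.1 * term t x.2) hinj).symm
    _ ≤ ∑ x ∈ K.sigma (fun k => Pset t (n - (t + 1) * k)),
          ((t : ℝ) + 2) ^ x.1 * term t x.2 := by
        apply Finset.sum_le_sum_of_subset_of_nonneg
        · intro x hx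
          rw [Finset.mem_image] at hx
          obtain ⟨p, hp, rfl⟩ := hx
          exact hmem p hp
        · intro x _ _
          exact mul_nonneg (by positivity) (term_nonneg t x.2)

lemma nat_lt_two_pow (m : ℕ) : m + 3 < 2 ^ (m + 2) := by
  induction m with
  | zero => norm_num
  | succ m ih =>
    have h : 2 ^ (m + 1 + 2) = 2 * 2 ^ (m + 2) := by ring
    omega

lemma real_lt_two_pow (m : ℕ) : ((m : ℝ) + 3) < 2 ^ (m + 2) := by
  have := nat_lt_two_pow m
  exact_mod_cast this

lemma qseq_two_eq (m : ℕ) :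
    qseq (m + 2) = (((m : ℝ) + 1) / (2 ^ (m + 2) - ((m : ℝ) + 2) - 1)) * qseq (m + 1) := by
  rfl

lemma qseq_nonneg (t : ℕ) : 0 ≤ qseq t := by
  induction t with
  | zero => simp [qseq]
  | succ t ih =>
    cases t with
    | zero => norm_num [qseq]
    | succ m =>
      rw [qseq_two_eq]
      have hd : (0 : ℝ) < 2 ^ (m + 2) - ((m : ℝ) + 2) - 1 := by
        have := real_lt_two_pow m
        linarith
      have hc : (0 : ℝ) ≤ ((m : ℝ) + 1) / (2 ^ (m + 2) - ((m : ℝ) + 2) - 1) := by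
        apply div_nonneg
        · positivity
        · linarith
      exact mul_nonneg hc ih

lemma W_one_le (n : ℕ) : W 1 n ≤ 2 ^ n := by
  have hsub : Pset 1 n ⊆ {fun _ : Fin 1 => n} := by
    intro p hp
    rw [mem_Pset] at hp
    have hsum : p 0 = n := by
      have := hp.2.2.2
      simpa [Fin.sum_univ_one] using this
    rw [Finset.mem_singleton]
    funext i
    rw [Subsingleton.elim i 0, hsum]
  calc W 1 n ≤ ∑ p ∈ ({fun _ : Fin 1 => n} : Finset (Fin 1 → ℕ)), term 1 p := by
        apply Finset.sum_le_sum_of_subset_of_nonneg hsub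
        intro p _ _
        exact term_nonneg 1 p
    _ = 2 ^ n := by
      rw [Finset.sum_singleton]
      unfold term b
      norm_num [Fin.prod_univ_one]

lemma main_bound : ∀ m : ℕ, ∀ n : ℕ,
    W (m + 1) n ≤ ((m : ℝ) + 1) * ((m : ℝ) + 2) * qseq (m + 1) * 2 ^ n := by
  intro m
  induction m with
  | zero =>
    intro n
    have : ((0 : ℝ) + 1) * ((0 : ℝ) + 2) * qseq 1 * 2 ^ n = 2 ^ n := by
      norm_num [qseq]
    rw [Nat.cast_zero, this]
    exact W_one_le n
  | succ m ih =>
    intro n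
    set Qm : ℝ := ((m : ℝ) + 1) * ((m : ℝ) + 2) * qseq (m + 1) with hQm
    have hQm0 : 0 ≤ Qm := by
      have := qseq_nonneg (m + 1)
      positivity
    set r : ℝ := ((m : ℝ) + 3) / 2 ^ (m + 2) with hr
    have h2pos : (0 : ℝ) < 2 ^ (m + 2) := by positivity
    have hr0 : 0 ≤ r := by positivity
    have hr1 : r < 1 := by
      rw [hr, div_lt_one h2pos]
      exact real_lt_two_pow m
    set K := (Finset.Icc 1 n).filter (fun k => (m + 1 + 1) * k ≤ n) with hK
    have h1 := W_step (m + 1) n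
    have h2 : ∀ k ∈ K, (((m + 1 : ℕ) : ℝ) + 2) ^ k * W (m + 1) (n - (m + 1 + 1) * k)
        ≤ (Qm * 2 ^ n) * r ^ k := by
      intro k hk
      rw [hK, Finset.mem_filter, Finset.mem_Icc] at hk
      obtain ⟨⟨hk1, hkn⟩, hkc⟩ := hk
      have hW := ih (n - (m + 1 + 1) * k)
      have hpow : (2 : ℝ) ^ (n - (m + 1 + 1) * k) = 2 ^ n / (2 ^ (m + 2)) ^ k := by
        rw [eq_div_iff (by positivity)]
        rw [← pow_mul, ← pow_add]
        congr 1
        have hmm : (m + 1 + 1) * k = (m + 2) * k := by ring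
        omega
      have hbase : (((m + 1 : ℕ) : ℝ) + 2) = (m : ℝ) + 3 := by push_cast; ring
      calc (((m + 1 : ℕ) : ℝ) + 2) ^ k * W (m + 1) (n - (m + 1 + 1) * k)
          ≤ (((m + 1 : ℕ) : ℝ) + 2) ^ k * (Qm * 2 ^ (n - (m + 1 + 1) * k)) := by
            apply mul_le_mul_of_nonneg_left hW (by positivity)
        _ = (Qm * 2 ^ n) * r ^ k := by
            rw [hbase, hpow, hr, div_pow]
            field_simp
    have h3 : ∑ k ∈ K, (((m + 1 : ℕ) : ℝ) + 2) ^ k * W (m + 1) (n - (m + 1 + 1) * k)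
        ≤ ∑ k ∈ K, (Qm * 2 ^ n) * r ^ k := Finset.sum_le_sum h2
    have h4 : ∑ k ∈ K, (Qm * 2 ^ n) * r ^ k ≤ (Qm * 2 ^ n) * (r * (1 - r)⁻¹) := by
      rw [← Finset.mul_sum]
      apply mul_le_mul_of_nonneg_left _ (by positivity)
      have hsub : ∑ k ∈ K, r ^ k ≤ ∑ k ∈ Finset.Icc 1 n, r ^ k := by
        apply Finset.sum_le_sum_of_subset_of_nonneg (Finset.filter_subset _ _)
        intro k _ _
        positivity
      have hIcc : ∑ k ∈ Finset.Icc 1 n, r ^ k = r * ∑ j ∈ Finset.range n, r ^ j := by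
        rw [Finset.mul_sum, ← Finset.Ico_add_one_right_eq_Icc, Finset.sum_Ico_eq_sum_range]
        apply Finset.sum_congr (by norm_num)
        intro j _
        rw [pow_add, pow_one]
      have hgeom : ∑ j ∈ Finset.range n, r ^ j ≤ (1 - r)⁻¹ := by
        have hs : Summable (fun j : ℕ => r ^ j) := summable_geometric_of_lt_one hr0 hr1
        have := Summable.sum_le_tsum (Finset.range n) (fun j _ => by positivity) hs
        rwa [tsum_geometric_of_lt_one hr0 hr1] at this
      calc ∑ k ∈ K, r ^ k ≤ r * ∑ j ∈ Finset.range n, r ^ j := by rw [← hIcc]; exact hsub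
        _ ≤ r * (1 - r)⁻¹ := mul_le_mul_of_nonneg_left hgeom hr0
    have h5 : (Qm * 2 ^ n) * (r * (1 - r)⁻¹)
        = (((m + 1 : ℕ) : ℝ) + 1) * (((m + 1 : ℕ) : ℝ) + 2) * qseq (m + 1 + 1) * 2 ^ n := by
      have hd : (0 : ℝ) < 2 ^ (m + 2) - ((m : ℝ) + 2) - 1 := by
        have := real_lt_two_pow m
        linarith
      have hr' : 1 - r = (2 ^ (m + 2) - ((m : ℝ) + 3)) / 2 ^ (m + 2) := by
        rw [hr]
        field_simp
      have : qseq (m + 1 + 1) = (((m : ℝ) + 1) / (2 ^ (m + 2) - ((m : ℝ) + 2) - 1)) * qseq (m + 1) :=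
        qseq_two_eq m
      rw [this, hr', hr, hQm]
      push_cast
      have hne2 : (2 : ℝ) ^ (m + 2) - ((m : ℝ) + 3) ≠ 0 := by linarith
      have hne3 : (2 : ℝ) ^ (m + 2) - ((m : ℝ) + 2) - 1 ≠ 0 := by linarith
      field_simp
      ring
    calc W (m + 1 + 1) n ≤ _ := h1
      _ ≤ _ := h3
      _ ≤ _ := h4
      _ = _ := h5

lemma primeWeight_le (t n : ℕ) : primeWeight t n ≤ qseq t * 2 ^ n := by
  cases t with
  | zero =>
    have h0 : primeWeight 0 n = 0 := by
      unfold primeWeight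
      apply Finset.sum_eq_zero
      intro p _
      norm_num
    rw [h0]
    have : qseq 0 = 0 := rfl
    rw [this, zero_mul]
  | succ m =>
    rw [primeWeight_eq]
    have h := main_bound m n
    have hc : (0 : ℝ) < ((m + 1 : ℕ) : ℝ) * (((m + 1 : ℕ) : ℝ) + 1) := by positivity
    have hcast : ((m + 1 : ℕ) : ℝ) = (m : ℝ) + 1 := by push_cast; ring
    calc (1 / (((m + 1 : ℕ) : ℝ) * (((m + 1 : ℕ) : ℝ) + 1))) * W (m + 1) n
        ≤ (1 / (((m + 1 : ℕ) : ℝ) * (((m + 1 : ℕ) : ℝ) + 1))) *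
            (((m : ℝ) + 1) * ((m : ℝ) + 2) * qseq (m + 1) * 2 ^ n) := by
          apply mul_le_mul_of_nonneg_left h (by positivity)
      _ = qseq (m + 1) * 2 ^ n := by
          rw [hcast]
          have h1 : ((m : ℝ) + 1) ≠ 0 := by positivity
          have h2 : ((m : ℝ) + 2) ≠ 0 := by positivity
          field_simp
          ring

lemma primeWeight_zero_of_gt (t n : ℕ) (h : n < t) : primeWeight t n = 0 := by
  rw [primeWeight_eq, W_eq_zero t n h, mul_zero]

lemma nat38 (m : ℕ) : 3 * m + 8 ≤ 2 ^ (m + 3) := by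
  induction m with
  | zero => norm_num
  | succ m ih =>
    have h : 2 ^ (m + 1 + 3) = 2 * 2 ^ (m + 3) := by ring
    omega

lemma qseq_le (t : ℕ) : qseq t ≤ 4 * (1 / 2) ^ t := by
  induction t with
  | zero => norm_num [qseq]
  | succ t ih =>
    cases t with
    | zero => norm_num [qseq]
    | succ m =>
      cases m with
      | zero =>
        have h2 : qseq 2 = 1 / 2 := by
          rw [qseq_two_eq 0]
          norm_num [qseq]
        rw [h2]
        norm_num
      | succ m =>
        have h38 : 3 * (m : ℝ) + 8 ≤ 2 ^ (m + 3) := by exact_mod_cast nat38 m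
        have hD : (0 : ℝ) < 2 ^ (m + 1 + 2) - (((m + 1 : ℕ) : ℝ) + 2) - 1 := by
          push_cast
          have : (m : ℝ) + 1 + 2 = (m : ℝ) + 3 := by ring
          nlinarith [h38, Nat.cast_nonneg (α := ℝ) m]
        have hc : (((m + 1 : ℕ) : ℝ) + 1) / (2 ^ (m + 1 + 2) - (((m + 1 : ℕ) : ℝ) + 2) - 1)
            ≤ 1 / 2 := by
          rw [div_le_div_iff₀ hD (by norm_num)]
          push_cast
          nlinarith [h38]
        calc qseq (m + 1 + 2)
            = (((m + 1 : ℕ) : ℝ) + 1) / (2 ^ (m + 1 + 2) - (((m + 1 : ℕ) : ℝ) + 2) - 1) *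
                qseq (m + 1 + 1) := by
              rw [qseq_two_eq (m + 1)]
          _ ≤ (1 / 2) * qseq (m + 1 + 1) :=
              mul_le_mul_of_nonneg_right hc (qseq_nonneg _)
          _ ≤ (1 / 2) * (4 * (1 / 2) ^ (m + 1 + 1)) :=
              mul_le_mul_of_nonneg_left ih (by norm_num)
          _ = 4 * (1 / 2) ^ (m + 1 + 2) := by ring

lemma qseq_summable : Summable qseq := by
  apply Summable.of_nonneg_of_le qseq_nonneg qseq_le
  exact summable_geometric_two.mul_left 4

end JugAux

theorem stmt_5 (n : ℕ) (hn : 1 ≤ n) :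
    (∑' t : ℕ, primeWeight t n) ≤ (∑' t : ℕ, qseq t) * 2 ^ n := by
  have hzero : ∀ t ∉ Finset.range (n + 1), primeWeight t n = 0 := by
    intro t ht
    rw [Finset.mem_range] at ht
    exact JugAux.primeWeight_zero_of_gt t n (by omega)
  rw [tsum_eq_sum hzero]
  calc ∑ t ∈ Finset.range (n + 1), primeWeight t n
      ≤ ∑ t ∈ Finset.range (n + 1), qseq t * 2 ^ n :=
        Finset.sum_le_sum fun t _ => JugAux.primeWeight_le t n
    _ = (∑ t ∈ Finset.range (n + 1), qseq t) * 2 ^ n := by rw [Finset.sum_mul]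
    _ ≤ (∑' t : ℕ, qseq t) * 2 ^ n := by
        apply mul_le_mul_of_nonneg_right _ (by positivity)
        exact Summable.sum_le_tsum _ (fun t _ => JugAux.qseq_nonneg t) JugAux.qseq_summable
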